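/- Let (X,T) be an invertible expansive dynamical system with the periodic specification property, where X is a nontrivial compact metric space. Then for all sufficiently large n the set Per_n(T) of fixed points of T^n is finite and nonempty, and the topological entropy of T equals the exponential growth rate of the number of periodic points: h_top(T) = lim_{n→∞} (1/n) log |Per_n(T)|. -/

import Mathlib

/-- `y` ε-traces the specification given by orbit segments `T^{[a j, b j]}(x j)`, `j < n`. -/
def Traces {X : Type*} [MetricSpace X] (T : X → X) (y : X) (n : ℕ)
    (a b : ℕ → ℕ) (x : ℕ → X) (ε : ℝ) : Prop :=
  ∀ j < n, ∀ k, a j ≤ k → k ≤ b j → dist (T^[k] y) (T^[k] (x j)) ≤ ε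

/-- The specification property. -/
def SpecProp {X : Type*} [MetricSpace X] (T : X → X) : Prop :=
  ∀ ε : ℝ, 0 < ε → ∃ N : ℕ, 0 < N ∧
    ∀ (n : ℕ) (a b : ℕ → ℕ) (x : ℕ → X),
      (∀ j < n, a j ≤ b j) → (∀ j, j + 1 < n → b j + N ≤ a (j + 1)) →
      ∃ y : X, Traces T y n a b x ε

/-- The periodic specification property. -/
def PerSpecProp {X : Type*} [MetricSpace X] (T : X → X) : Prop :=
  ∀ ε : ℝ, 0 < ε → ∃ N : ℕ, 0 < N ∧
    ∀ (n : ℕ) (a b : ℕ → ℕ) (x : ℕ → X), 0 < n →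
      (∀ j < n, a j ≤ b j) → (∀ j, j + 1 < n → b j + N ≤ a (j + 1)) →
      ∃ y : X, Traces T y n a b x ε ∧ T^[b (n - 1) - a 0 + N] y = y


/-- An invertible system is expansive: some `c > 0` separates distinct full orbits
(over all n ∈ ℤ, encoded via forward iterates of `T` and `T.symm`). -/
def ExpansiveHomeo {X : Type*} [MetricSpace X] (T : X ≃ₜ X) : Prop :=
  ∃ c : ℝ, 0 < c ∧ ∀ x y : X,
    (∀ n : ℕ, dist (T^[n] x) (T^[n] y) < c ∧ dist (T.symm^[n] x) (T.symm^[n] y) < c) →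
    x = y

open Filter Set Dynamics Function

namespace BowenAux

variable {X : Type*} [MetricSpace X]

/-- metric entourage -/
def Uball (X : Type*) [MetricSpace X] (r : ℝ) : Set (X × X) := {p | dist p.1 p.2 < r}

lemma Uball_mem {r : ℝ} (hr : 0 < r) : Uball X r ∈ uniformity X :=
  Metric.dist_mem_uniformity hr

lemma Uball_symm (r : ℝ) : SetRel.IsSymm (Uball X r) :=
  ⟨fun a b (h : dist a b < r) => show dist b a < r by rwa [dist_comm]⟩

lemma mem_Uball {x y : X} {r : ℝ} : (x, y) ∈ Uball X r ↔ dist x y < r := Iff.rfl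

section Periodic

variable (T : X ≃ₜ X)

lemma iterate_mod {n : ℕ} {x : X} (hx : T^[n] x = x) (k : ℕ) :
    T^[k] x = T^[k % n] x := by
  conv_lhs => rw [← Nat.mod_add_div k n, Function.iterate_add_apply]
  congr 1
  rw [Function.iterate_mul]
  exact Function.iterate_fixed hx _

lemma symm_iterate_eq {n : ℕ} (hn : 1 ≤ n) {x : X} (hx : T^[n] x = x) (k : ℕ) :
    T.symm^[k] x = T^[k * (n - 1)] x := by
  have hinj : Function.Injective (T : X → X)^[k] :=
    (Function.LeftInverse.iterate (fun z => T.symm_apply_apply z) k).injective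
  apply hinj
  have h1 : (T : X → X)^[k] (T.symm^[k] x) = x :=
    (Function.LeftInverse.iterate (fun z => T.apply_symm_apply z) k) x
  rw [h1, ← Function.iterate_add_apply]
  have h2 : k + k * (n - 1) = n * k := by
    cases n with
    | zero => omega
    | succ m => simp [Nat.mul_comm, Nat.mul_succ, Nat.succ_mul]; omega
  rw [h2, Function.iterate_mul]
  exact (Function.iterate_fixed hx _).symm

/-- Two `n`-periodic points whose length-`n` orbit segments stay `c`-close are equal. -/
lemma per_sep {c : ℝ} (hc : 0 < c)
    (hexp : ∀ x y : X,
      (∀ m : ℕ, dist (T^[m] x) (T^[m] y) < c ∧ dist (T.symm^[m] x) (T.symm^[m] y) < c) →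
      x = y)
    {n : ℕ} (hn : 1 ≤ n) {x y : X} (hx : T^[n] x = x) (hy : T^[n] y = y)
    (h : ∀ k < n, dist (T^[k] x) (T^[k] y) < c) : x = y := by
  apply hexp
  intro m
  constructor
  · rw [iterate_mod T hx m, iterate_mod T hy m]
    exact h _ (Nat.mod_lt _ hn)
  · rw [symm_iterate_eq T hn hx m, symm_iterate_eq T hn hy m,
      iterate_mod T hx _, iterate_mod T hy _]
    exact h _ (Nat.mod_lt _ hn)

end Periodic

section Net

open ENNReal EReal

variable [CompactSpace X] (T : X ≃ₜ X)

lemma per_isDynNetIn {c : ℝ} (hc : 0 < c)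
    (hexp : ∀ x y : X,
      (∀ m : ℕ, dist (T^[m] x) (T^[m] y) < c ∧ dist (T.symm^[m] x) (T.symm^[m] y) < c) →
      x = y)
    {n : ℕ} (hn : 1 ≤ n) {s : Set X} (hs : s ⊆ {x : X | T^[n] x = x}) :
    IsDynNetIn (⇑T) univ (Uball X (c/2)) n s := by
  refine ⟨subset_univ s, fun x hx y hy hxy => ?_⟩
  rw [Function.onFun, Set.disjoint_left]
  intro z hz1 hz2
  apply hxy
  apply per_sep T hc hexp hn (hs hx) (hs hy)
  intro k hk
  have h1 : dist (T^[k] x) (T^[k] z) < c/2 := (mem_ball_dynEntourage.1 hz1) k hk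
  have h2 : dist (T^[k] y) (T^[k] z) < c/2 := (mem_ball_dynEntourage.1 hz2) k hk
  calc dist (T^[k] x) (T^[k] y)
      ≤ dist (T^[k] x) (T^[k] z) + dist (T^[k] z) (T^[k] y) := dist_triangle _ _ _
    _ < c/2 + c/2 := add_lt_add h1 (by rw [dist_comm]; exact h2)
    _ = c := by ring

lemma netMaxcard_lt_top {r : ℝ} (hr : 0 < r) (n : ℕ) :
    netMaxcard (⇑T) univ (Uball X r) n < ⊤ :=
  lt_of_le_of_lt (netMaxcard_le_coverMincard (U := Uball X r) (⇑T) univ n)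
    (coverMincard_finite_of_isCompact_invariant isCompact_univ (mapsTo_univ _ _)
      (Uball_mem hr) n)

lemma per_finite {c : ℝ} (hc : 0 < c)
    (hexp : ∀ x y : X,
      (∀ m : ℕ, dist (T^[m] x) (T^[m] y) < c ∧ dist (T.symm^[m] x) (T.symm^[m] y) < c) →
      x = y)
    {n : ℕ} (hn : 1 ≤ n) : {x : X | T^[n] x = x}.Finite := by
  by_contra hinf
  have hinf : Set.Infinite {x : X | T^[n] x = x} := hinf
  have hfin := netMaxcard_lt_top T (by positivity : (0:ℝ) < c/2) n
  set K := (netMaxcard (⇑T) univ (Uball X (c/2)) n).toNat with hK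
  obtain ⟨t, ht, hcard⟩ := hinf.exists_subset_card_eq (K+1)
  have hnet := per_isDynNetIn T hc hexp hn ht
  have hle : (t.card : ℕ∞) ≤ netMaxcard (⇑T) univ (Uball X (c/2)) n :=
    hnet.card_le_netMaxcard
  rw [hcard, ← ENat.coe_toNat hfin.ne, ← hK, Nat.cast_le] at hle
  omega

lemma per_card_le_netMaxcard {c : ℝ} (hc : 0 < c)
    (hexp : ∀ x y : X,
      (∀ m : ℕ, dist (T^[m] x) (T^[m] y) < c ∧ dist (T.symm^[m] x) (T.symm^[m] y) < c) →
      x = y)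
    {n : ℕ} (hn : 1 ≤ n) :
    (Nat.card {x : X | T^[n] x = x} : ℕ∞) ≤ netMaxcard (⇑T) univ (Uball X (c/2)) n := by
  have hfin := per_finite T hc hexp hn
  have hnet := per_isDynNetIn T hc hexp hn (s := (hfin.toFinset : Set X))
    (by simp)
  have hle := hnet.card_le_netMaxcard
  rwa [Nat.card_coe_set_eq, Set.ncard_eq_toFinset_card _ hfin]

lemma per_nonempty [Nontrivial X] (hspec : PerSpecProp (⇑T)) :
    ∃ N₁ : ℕ, 0 < N₁ ∧ ∀ n, N₁ ≤ n → {x : X | T^[n] x = x}.Nonempty := by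
  obtain ⟨N, hN, hP⟩ := hspec 1 one_pos
  refine ⟨N, hN, fun n hn => ?_⟩
  obtain ⟨x0⟩ : Nonempty X := inferInstance
  obtain ⟨y, -, hy⟩ := hP 1 (fun _ => 0) (fun _ => n - N) (fun _ => x0) one_pos
    (fun j _ => Nat.zero_le _) (fun j hj => by omega)
  refine ⟨y, ?_⟩
  have h3 : n - N + N = n := by omega
  simpa [h3] using hy

lemma netMaxcard_le_per_card (hspec : PerSpecProp (⇑T))
    (hfin : ∀ m, 1 ≤ m → {x : X | T^[m] x = x}.Finite)
    {ε : ℝ} (hε : 0 < ε) :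
    ∃ N : ℕ, 0 < N ∧ ∀ n, 1 ≤ n →
      netMaxcard (⇑T) univ (Uball X (3*ε)) n ≤
        (Nat.card {x : X | T^[n-1+N] x = x} : ℕ∞) := by
  obtain ⟨N, hN, hP⟩ := hspec ε hε
  refine ⟨N, hN, fun n hn => ?_⟩
  have key : ∀ x : X, ∃ y : X,
      (∀ k < n, dist (T^[k] y) (T^[k] x) ≤ ε) ∧ T^[n-1+N] y = y := by
    intro x
    obtain ⟨y, htr, hper⟩ := hP 1 (fun _ => 0) (fun _ => n-1) (fun _ => x) one_pos
      (fun _ _ => Nat.zero_le _) (fun j hj => by omega)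
    refine ⟨y, fun k hk => htr 0 one_pos k (Nat.zero_le _) (by show k ≤ n - 1; omega), ?_⟩
    have h3 : n - 1 + N = n - 1 + N := rfl
    simpa using hper
  choose f hf1 hf2 using key
  have hPfin := hfin (n-1+N) (by omega)
  rw [netMaxcard]
  apply iSup₂_le
  intro s hs
  have hinj : Set.InjOn f (s : Set X) := by
    intro x hx y hy hxy
    apply hs.2.elim_set hx hy (f x)
    · show f x ∈ UniformSpace.ball x (dynEntourage (⇑T) (Uball X (3*ε)) n)
      rw [mem_ball_dynEntourage]
      intro k hk
      show dist (T^[k] x) (T^[k] (f x)) < 3*ε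
      have h := hf1 x k hk
      rw [dist_comm] at h
      linarith
    · show f x ∈ UniformSpace.ball y (dynEntourage (⇑T) (Uball X (3*ε)) n)
      rw [hxy, mem_ball_dynEntourage]
      intro k hk
      show dist (T^[k] y) (T^[k] (f y)) < 3*ε
      have h := hf1 y k hk
      rw [dist_comm] at h
      linarith
  have hmaps : ∀ x ∈ s, f x ∈ hPfin.toFinset := by
    intro x hx
    rw [Set.Finite.mem_toFinset]
    exact hf2 x
  have hcard := Finset.card_le_card_of_injOn f hmaps hinj
  rw [Nat.card_coe_set_eq, Set.ncard_eq_toFinset_card _ hPfin]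
  exact_mod_cast hcard

end Net

section Entropy

open ENNReal EReal

lemma log_coe_div_coe {k n : ℕ} (hk : 1 ≤ k) (hn : 1 ≤ n) :
    ENNReal.log ((k : ℕ∞) : ℝ≥0∞) / (n : EReal) = ((Real.log k / n : ℝ) : EReal) := by
  rw [ENat.toENNReal_coe, ← ENNReal.ofReal_natCast,
    ENNReal.log_ofReal_of_pos (by exact_mod_cast hk), EReal.coe_div]
  norm_cast

variable [CompactSpace X] [Nontrivial X] (T : X ≃ₜ X)

lemma toNat_one_le {r : ℝ} (hr : 0 < r) (n : ℕ) :
    1 ≤ (netMaxcard (⇑T) univ (Uball X r) n).toNat := by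
  have h1 : (1:ℕ∞) ≤ netMaxcard (⇑T) univ (Uball X r) n :=
    (one_le_netMaxcard_iff (⇑T) univ (Uball X r) n).2 univ_nonempty
  rw [← ENat.coe_toNat (netMaxcard_lt_top T hr n).ne] at h1
  exact_mod_cast h1

lemma log_netMaxcard_eq {r : ℝ} (hr : 0 < r) {n : ℕ} (hn : 1 ≤ n) :
    ENNReal.log (netMaxcard (⇑T) univ (Uball X r) n) / (n : EReal)
      = ((Real.log ((netMaxcard (⇑T) univ (Uball X r) n).toNat) / n : ℝ) : EReal) := by
  conv_lhs => rw [← ENat.coe_toNat (netMaxcard_lt_top T hr n).ne]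
  exact log_coe_div_coe (toNat_one_le T hr n) hn

lemma card_per_pos {m : ℕ} (hfin : {x : X | T^[m] x = x}.Finite)
    (hne : {x : X | T^[m] x = x}.Nonempty) :
    0 < Nat.card {x : X | T^[m] x = x} := by
  haveI := hfin.to_subtype
  haveI := hne.to_subtype
  exact Nat.card_pos

lemma lower_bound (hspec : PerSpecProp (⇑T))
    (hfin : ∀ m, 1 ≤ m → {x : X | T^[m] x = x}.Finite)
    {N₁ : ℕ} (hne : ∀ n, N₁ ≤ n → {x : X | T^[n] x = x}.Nonempty)
    {t : ℝ} (ht : (t : EReal) < coverEntropy (⇑T) univ) :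
    ∀ᶠ m : ℕ in atTop, t < Real.log (Nat.card {x : X | T^[m] x = x}) / m := by
  have humnonneg : ∀ᶠ m : ℕ in atTop,
      0 ≤ Real.log (Nat.card {x : X | T^[m] x = x}) / m := by
    filter_upwards [eventually_ge_atTop (max N₁ 1)] with m hm
    have h1 : 0 < Nat.card {x : X | T^[m] x = x} :=
      card_per_pos T (hfin m (le_trans (le_max_right _ _) hm))
        (hne m (le_trans (le_max_left _ _) hm))
    apply _root_.div_nonneg _ (Nat.cast_nonneg m)
    apply Real.log_nonneg
    exact_mod_cast h1
  rcases lt_or_ge t 0 with h0 | h0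
  · filter_upwards [humnonneg] with m hm
    linarith
  rw [← coverEntropyInf_eq_coverEntropy (⇑T) (mapsTo_univ _ _),
    coverEntropyInf_eq_iSup_basis_netEntropyInfEntourage Metric.uniformity_basis_dist
      (⇑T) univ] at ht
  obtain ⟨t', h1, h2⟩ := exists_between_coe_real ht
  have htt' : t < t' := by exact_mod_cast h1
  rw [lt_iSup_iff] at h2
  obtain ⟨ε, h2⟩ := h2
  rw [lt_iSup_iff] at h2
  obtain ⟨hε, h2⟩ := h2
  have hε' : 0 < ε/3 := by linarith
  obtain ⟨N, hN, hkey⟩ := netMaxcard_le_per_card T hspec hfin hε'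
  have h3ε : 3 * (ε/3) = ε := by ring
  rw [h3ε] at hkey
  have h2' : (t' : EReal) < atTop.liminf
      (fun n : ℕ => ENNReal.log (netMaxcard (⇑T) univ (Uball X ε) n) / n) := h2
  have hev := eventually_lt_of_lt_liminf h2'
  have hev' : ∀ᶠ n : ℕ in atTop,
      t' < Real.log ((netMaxcard (⇑T) univ (Uball X ε) n).toNat) / n := by
    filter_upwards [hev, eventually_ge_atTop 1] with n h hn1
    rw [log_netMaxcard_eq T hε hn1] at h
    exact_mod_cast h
  rw [eventually_atTop] at hev'
  obtain ⟨n₀, hn₀⟩ := hev'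
  have htend : Tendsto (fun m : ℕ => t' - (N-1 : ℝ) * t' / m) atTop (nhds t') := by
    have h := _root_.tendsto_const_div_atTop_nhds_zero_nat ((N-1:ℝ) * t')
    simpa using tendsto_const_nhds.sub h
  have hev2 : ∀ᶠ m : ℕ in atTop, t < t' - (N-1:ℝ) * t' / m :=
    htend.eventually (eventually_gt_nhds htt')
  filter_upwards [hev2, eventually_ge_atTop (n₀ + N), eventually_ge_atTop (N + 1)]
    with m hm2 hm3 hm4
  set n := m - N + 1 with hndef
  have hmn : n - 1 + N = m := by omega
  have hn1 : 1 ≤ n := by omega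
  have hkey' := hkey n hn1
  rw [hmn] at hkey'
  have hGfin := (netMaxcard_lt_top T hε n).ne
  have hcard : (netMaxcard (⇑T) univ (Uball X ε) n).toNat
      ≤ Nat.card {x : X | T^[m] x = x} := by
    rw [← ENat.coe_toNat hGfin] at hkey'
    exact_mod_cast hkey'
  have hw := hn₀ n (by omega)
  have hmpos : (0:ℝ) < m := by
    have h : 0 < m := by omega
    exact_mod_cast h
  have hnpos : (0:ℝ) < n := by
    have h : 0 < n := by omega
    exact_mod_cast h
  set G := (netMaxcard (⇑T) univ (Uball X ε) n).toNat with hGdef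
  have hG1 := toNat_one_le T hε n
  have hstep0 : t' * n < Real.log G := (lt_div_iff₀ hnpos).1 hw
  have hstep1 : t' * n / m < Real.log G / m := by gcongr
  have hstep2 : Real.log G / m ≤ Real.log (Nat.card {x : X | T^[m] x = x}) / m := by
    have hlog : Real.log G ≤ Real.log (Nat.card {x : X | T^[m] x = x}) :=
      Real.log_le_log (by exact_mod_cast hG1) (by exact_mod_cast hcard)
    gcongr
  have hcast : (n:ℝ) = (m:ℝ) - N + 1 := by
    rw [hndef]
    push_cast [Nat.cast_sub (show N ≤ m by omega)]
    ring
  have heq : t' - (N-1:ℝ) * t' / m = t' * n / m := by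
    rw [hcast]
    field_simp
    ring
  rw [heq] at hm2
  calc t < t' * n / m := hm2
    _ < Real.log G / m := hstep1
    _ ≤ _ := hstep2

lemma upper_bound {c : ℝ} (hc : 0 < c)
    (hexp : ∀ x y : X,
      (∀ m : ℕ, dist (T^[m] x) (T^[m] y) < c ∧ dist (T.symm^[m] x) (T.symm^[m] y) < c) →
      x = y)
    {N₁ : ℕ} (hne : ∀ n, N₁ ≤ n → {x : X | T^[n] x = x}.Nonempty)
    {s : ℝ} (hs : netEntropyEntourage (⇑T) univ (Uball X (c/2)) < (s : EReal)) :
    ∀ᶠ m : ℕ in atTop, Real.log (Nat.card {x : X | T^[m] x = x}) / m < s := by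
  have hc2 : (0:ℝ) < c/2 := by linarith
  have hs' : atTop.limsup
      (fun n : ℕ => ENNReal.log (netMaxcard (⇑T) univ (Uball X (c/2)) n) / n)
        < (s : EReal) := hs
  have hev := eventually_lt_of_limsup_lt hs'
  filter_upwards [hev, eventually_ge_atTop (max N₁ 1)] with m h hm
  have hm1 : 1 ≤ m := le_trans (le_max_right _ _) hm
  have hfinm := per_finite T hc hexp hm1
  have hnem := hne m (le_trans (le_max_left _ _) hm)
  rw [log_netMaxcard_eq T hc2 hm1] at h
  have hlt : Real.log ((netMaxcard (⇑T) univ (Uball X (c/2)) m).toNat) / m < s := by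
    exact_mod_cast h
  have hcardle : Nat.card {x : X | T^[m] x = x}
      ≤ (netMaxcard (⇑T) univ (Uball X (c/2)) m).toNat := by
    have h1 := per_card_le_netMaxcard T hc hexp hm1
    rw [← ENat.coe_toNat (netMaxcard_lt_top T hc2 m).ne] at h1
    exact_mod_cast h1
  have hcpos := card_per_pos T hfinm hnem
  have hmpos : (0:ℝ) < m := by exact_mod_cast hm1
  calc Real.log (Nat.card {x : X | T^[m] x = x}) / m
      ≤ Real.log ((netMaxcard (⇑T) univ (Uball X (c/2)) m).toNat) / m := by
        have hlog : Real.log (Nat.card {x : X | T^[m] x = x})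
            ≤ Real.log ((netMaxcard (⇑T) univ (Uball X (c/2)) m).toNat) :=
          Real.log_le_log (by exact_mod_cast hcpos) (by exact_mod_cast hcardle)
        gcongr
    _ < s := hlt

end Entropy

end BowenAux

open BowenAux in
open ENNReal EReal in
theorem entropy_eq_periodic_growth {X : Type*} [MetricSpace X] [CompactSpace X]
    [Nontrivial X] (T : X ≃ₜ X) (hexp : ExpansiveHomeo T)
    (hspec : PerSpecProp (⇑T)) :
    (∃ N₀ : ℕ, ∀ n, N₀ ≤ n →
        {x : X | T^[n] x = x}.Finite ∧ {x : X | T^[n] x = x}.Nonempty) ∧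
    Dynamics.coverEntropy (⇑T) Set.univ ≠ ⊤ ∧
    Tendsto (fun n : ℕ => Real.log (Nat.card {x : X | T^[n] x = x}) / n)
      atTop (nhds (Dynamics.coverEntropy (⇑T) Set.univ).toReal) := by
  obtain ⟨c, hc, hexpc⟩ := hexp
  have hexpc' : ∀ x y : X,
      (∀ m : ℕ, dist (T^[m] x) (T^[m] y) < c ∧ dist (T.symm^[m] x) (T.symm^[m] y) < c) →
      x = y := fun x y h => hexpc x y h
  obtain ⟨N₁, hN₁, hne⟩ := per_nonempty T hspec
  have hfin : ∀ m, 1 ≤ m → {x : X | T^[m] x = x}.Finite :=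
    fun m hm => per_finite T hc hexpc' hm
  have hc2 : (0:ℝ) < c/2 := by linarith
  have hE_lt_top : netEntropyEntourage (⇑T) Set.univ (Uball X (c/2)) < ⊤ :=
    lt_of_le_of_lt
      (netEntropyEntourage_le_coverEntropyEntourage (U := Uball X (c/2)) (⇑T) Set.univ)
      (coverEntropyEntourage_finite_of_isCompact_invariant isCompact_univ
        (Set.mapsTo_univ _ _) (Uball_mem hc2))
  have hE_nonneg : 0 ≤ netEntropyEntourage (⇑T) Set.univ (Uball X (c/2)) :=
    netEntropyEntourage_nonneg (⇑T) Set.univ_nonempty (Uball X (c/2))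
  have hE_ne_bot : netEntropyEntourage (⇑T) Set.univ (Uball X (c/2)) ≠ ⊥ :=
    ne_of_gt (lt_of_lt_of_le (by norm_num : (⊥ : EReal) < 0) hE_nonneg)
  have hE_coe : ((netEntropyEntourage (⇑T) Set.univ (Uball X (c/2))).toReal : EReal)
      = netEntropyEntourage (⇑T) Set.univ (Uball X (c/2)) :=
    EReal.coe_toReal hE_lt_top.ne hE_ne_bot
  have hE_le : netEntropyEntourage (⇑T) Set.univ (Uball X (c/2))
      ≤ coverEntropy (⇑T) Set.univ :=
    netEntropyEntourage_le_coverEntropy (⇑T) Set.univ (Uball_mem hc2)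
  have hCE_ne_top : coverEntropy (⇑T) Set.univ ≠ ⊤ := by
    intro htop
    set sE := (netEntropyEntourage (⇑T) Set.univ (Uball X (c/2))).toReal + 1 with hsE
    have h1 := lower_bound T hspec hfin hne (t := sE)
      (by rw [htop]; exact EReal.coe_lt_top _)
    have h2 := upper_bound T hc hexpc' hne (s := sE) (by
      rw [← hE_coe]
      exact_mod_cast (lt_add_one _))
    obtain ⟨m, hm⟩ := (h1.and h2).exists
    linarith [hm.1, hm.2]
  have hCE_nonneg : 0 ≤ coverEntropy (⇑T) Set.univ :=
    coverEntropy_nonneg (⇑T) Set.univ_nonempty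
  have hCE_ne_bot : coverEntropy (⇑T) Set.univ ≠ ⊥ :=
    ne_of_gt (lt_of_lt_of_le (by norm_num : (⊥ : EReal) < 0) hCE_nonneg)
  have hLcoe : ((coverEntropy (⇑T) Set.univ).toReal : EReal) = coverEntropy (⇑T) Set.univ :=
    EReal.coe_toReal hCE_ne_top hCE_ne_bot
  refine ⟨⟨max N₁ 1, fun n hn =>
    ⟨hfin n (le_trans (le_max_right _ _) hn), hne n (le_trans (le_max_left _ _) hn)⟩⟩,
    hCE_ne_top, ?_⟩
  refine tendsto_order.2 ⟨fun t htL => ?_, fun s hsL => ?_⟩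
  · apply lower_bound T hspec hfin hne
    rw [← hLcoe]
    exact_mod_cast htL
  · apply upper_bound T hc hexpc' hne
    calc netEntropyEntourage (⇑T) Set.univ (Uball X (c/2))
        ≤ coverEntropy (⇑T) Set.univ := hE_le
      _ = ((coverEntropy (⇑T) Set.univ).toReal : EReal) := hLcoe.symm
      _ < (s : EReal) := by exact_mod_cast hsL
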